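/- Fix b ≥ 1 and define the matrix A_b indexed by ordered partitions of b, where the (q,r) entry equals the number of embeddings (trivial or nontrivial) of q into r. Then the trace of A_b equals p(b) + ∑_{i=0}^{b-1} 2^{b-i-1}·p(i), where p(i) is the number of unordered partitions of i (with p(0)=1). -/

import Mathlib

/-- The number of embeddings (trivial or nontrivial) of the ordered partition `q`
into the ordered partition `r`: the trivial embedding exists iff `q = r`
(equivalently, their lists of parts coincide), and a nontrivial embedding is a
choice of strictly increasing indices `i_2 < ⋯ < i_k` into the parts of `r`
with `q_j ≤ r_{i_j}` for `2 ≤ j ≤ k`. -/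
def embCount {b : ℕ} (q r : Composition b) : ℕ :=
  (if q.blocks = r.blocks then 1 else 0) +
    Fintype.card {f : Fin q.blocks.tail.length → Fin r.blocks.length //
      (∀ i j, i < j → f i < f j) ∧ ∀ j, q.blocks.tail.get j ≤ r.blocks.get (f j)}

/-- The transfer matrix `A_b`, indexed by ordered partitions of `b`, whose
`(q, r)` entry is the number of embeddings of `q` into `r`. -/
def A (b : ℕ) : Matrix (Composition b) (Composition b) ℕ := fun q r => embCount q r


lemma strictMono_eq_succAbove {n : ℕ} (f : Fin n → Fin (n+1)) (hf : StrictMono f) :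
    ∃ p : Fin (n+1), f = p.succAbove := by
  have hinj := hf.injective
  have hcard : (Finset.univ.image f).card = n := by
    rw [Finset.card_image_of_injective _ hinj, Finset.card_univ, Fintype.card_fin]
  obtain ⟨p, hp⟩ : ∃ p : Fin (n+1), p ∉ Finset.univ.image f := by
    by_contra h
    push_neg at h
    have : (Finset.univ.image f) = Finset.univ := Finset.eq_univ_of_forall h
    rw [this] at hcard
    simp at hcard
  refine ⟨p, ?_⟩
  have hsub : Finset.univ.image f ⊆ Finset.univ.image p.succAbove := by
    intro x hx
    simp only [Finset.mem_image, Finset.mem_univ, true_and] at hx ⊢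
    obtain ⟨j, rfl⟩ := hx
    have hne' : f j ≠ p := fun h => hp (Finset.mem_image.2 ⟨j, Finset.mem_univ _, h⟩)
    obtain ⟨k, hk⟩ := Fin.exists_succAbove_eq hne'
    exact ⟨k, hk⟩
  have hcard2 : (Finset.univ.image p.succAbove).card = n := by
    rw [Finset.card_image_of_injective _ (Fin.succAbove_right_injective), Finset.card_univ,
      Fintype.card_fin]
  have heq : Finset.univ.image f = Finset.univ.image p.succAbove :=
    Finset.eq_of_subset_of_card_le hsub (by rw [hcard, hcard2])
  have hr : Set.range f = Set.range p.succAbove := by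
    have h1 : Set.range f = ↑(Finset.univ.image f) := by ext x; simp
    have h2 : Set.range p.succAbove = ↑(Finset.univ.image p.succAbove) := by ext x; simp
    rw [h1, h2, heq]
  have inst : WellFoundedLT (Fin n) := inferInstance
  exact (@StrictMono.range_inj (Fin n) (Fin (n+1)) _ _ inst f p.succAbove hf (Fin.strictMono_succAbove p)).1 hr


lemma cond_iff (a : ℕ) (M : List ℕ) (p : Fin (M.length + 1)) :
    (∀ j : Fin M.length, M.get j ≤ (a :: M).get (p.succAbove j)) ↔
      ((a :: M).take (p.val + 1)).Pairwise (· ≥ ·) := by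
  have hlen : ((a :: M).take (p.val + 1)).length = p.val + 1 := by
    rw [List.length_take]
    simp [Nat.succ_le_succ p.is_le]
  rw [← List.isChain_iff_pairwise, List.isChain_iff_getElem]
  constructor
  · intro h i hi
    rw [hlen] at hi
    have hi : i < p.val := by omega
    -- i < p.val ; goal : take[i] ≥ take[i+1]
    have hi' : i < M.length := lt_of_lt_of_le hi p.is_le
    have hcast : (⟨i, hi'⟩ : Fin M.length).castSucc < p := by
      simp [Fin.lt_def, hi]
    have := h ⟨i, hi'⟩
    rw [Fin.succAbove_of_castSucc_lt _ _ hcast] at this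
    simp only [List.get_eq_getElem] at this ⊢
    rw [List.getElem_take, List.getElem_take]
    simpa using this
  · intro h j
    by_cases hc : j.castSucc < p
    · rw [Fin.succAbove_of_castSucc_lt _ _ hc]
      have hj : (j : ℕ) < p.val := hc
      have := h (j : ℕ) (by rw [hlen]; omega)
      simp only [List.get_eq_getElem, List.getElem_take] at this ⊢
      simpa using this
    · rw [Fin.succAbove_of_le_castSucc _ _ (not_lt.1 hc)]
      simp

lemma card_emb_cons (a : ℕ) (M : List ℕ) :
    Fintype.card {f : Fin M.length → Fin (M.length + 1) //
      (∀ i j, i < j → f i < f j) ∧ ∀ j, M.get j ≤ (a :: M).get (f j)} =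
    ((Finset.range (M.length + 1)).filter
      fun m => ((a :: M).take (m + 1)).Pairwise (· ≥ ·)).card := by
  rw [Fintype.card_subtype]
  refine (Finset.card_bij
    (fun m hm => Fin.succAbove ⟨m, Finset.mem_range.1 (Finset.mem_filter.1 hm).1⟩)
    ?_ ?_ ?_).symm
  · intro m hm
    obtain ⟨hm1, hm2⟩ := Finset.mem_filter.1 hm
    refine Finset.mem_filter.2 ⟨Finset.mem_univ _, ?_, ?_⟩
    · exact fun i j hij => Fin.strictMono_succAbove _ hij
    · exact (cond_iff a M _).2 hm2
  · intro m1 hm1 m2 hm2 h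
    have := Fin.succAbove_left_injective h
    exact Fin.mk.inj_iff.1 this
  · intro f hf
    obtain ⟨-, h1, h2⟩ := Finset.mem_filter.1 hf
    have hsm : StrictMono f := fun i j hij => h1 i j hij
    obtain ⟨p, rfl⟩ := strictMono_eq_succAbove f hsm
    refine ⟨p.val, Finset.mem_filter.2 ⟨Finset.mem_range.2 p.isLt, (cond_iff a M p).1 h2⟩, ?_⟩
    simp



lemma sum_D (b : ℕ) :
    ∑ q : Composition b, ((Finset.range q.blocks.length).filter
      (fun m => (q.blocks.take (m + 1)).Pairwise (· ≥ ·))).card =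
    ∑ i ∈ Finset.Icc 1 b, Fintype.card (Nat.Partition i) * Fintype.card (Composition (b - i)) := by
  classical
  rw [← Finset.card_sigma]
  have hR : ∑ i ∈ Finset.Icc 1 b,
      Fintype.card (Nat.Partition i) * Fintype.card (Composition (b - i)) =
      ((Finset.Icc 1 b).sigma
        (fun i => (Finset.univ : Finset (Nat.Partition i × Composition (b - i))))).card := by
    rw [Finset.card_sigma]
    exact Finset.sum_congr rfl fun i _ => by rw [Finset.card_univ, Fintype.card_prod]
  rw [hR]
  · refine Finset.card_bij
      (fun x _ => (⟨(x.1.blocks.take (x.2 + 1)).sum,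
        ⟨⟨↑(x.1.blocks.take (x.2 + 1)),
          fun {j} hj => x.1.blocks_pos (List.take_subset _ x.1.blocks (Multiset.mem_coe.1 hj)),
          Multiset.sum_coe _⟩,
         ⟨x.1.blocks.drop (x.2 + 1),
          fun {j} hj => x.1.blocks_pos (List.drop_subset _ x.1.blocks hj),
          by have := List.sum_take_add_sum_drop x.1.blocks (x.2 + 1)
             rw [x.1.blocks_sum] at this; omega⟩⟩⟩ :
        (i : ℕ) × (Nat.Partition i × Composition (b - i))))
      ?_ ?_ ?_
    · rintro ⟨q, m⟩ hx
      simp only [Finset.mem_sigma, Finset.mem_univ, Finset.mem_filter, Finset.mem_range,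
        true_and] at hx
      obtain ⟨hm, _⟩ := hx
      refine Finset.mem_sigma.2 ⟨Finset.mem_Icc.2 ⟨?_, ?_⟩, Finset.mem_univ _⟩
      · refine List.sum_pos _ (fun j hj => q.blocks_pos (List.take_subset _ _ hj)) ?_
        intro h
        have h2 : (q.blocks.take (m + 1)).length = 0 := by rw [h]; rfl
        rw [List.length_take] at h2
        omega
      · show (q.blocks.take (m + 1)).sum ≤ b
        have := List.sum_take_add_sum_drop q.blocks (m + 1)
        rw [q.blocks_sum] at this; omega
    · rintro ⟨q1, m1⟩ h1 ⟨q2, m2⟩ h2 h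
      simp only [Finset.mem_sigma, Finset.mem_univ, Finset.mem_filter, Finset.mem_range,
        true_and] at h1 h2
      have hparts := congrArg (fun x : (i : ℕ) × (Nat.Partition i × Composition (b - i)) =>
        x.2.1.parts) h
      have hblocks := congrArg (fun x : (i : ℕ) × (Nat.Partition i × Composition (b - i)) =>
        x.2.2.blocks) h
      dsimp only at hparts hblocks
      obtain ⟨hm1, hs1⟩ := h1
      obtain ⟨hm2, hs2⟩ := h2
      have hperm := Multiset.coe_eq_coe.1 hparts
      have hteq : q1.blocks.take (m1 + 1) = q2.blocks.take (m2 + 1) :=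
        List.Perm.eq_of_pairwise' hs1 hs2 hperm
      have hlen := congrArg List.length hteq
      rw [List.length_take, List.length_take] at hlen
      have hm : m1 = m2 := by omega
      have hq : q1.blocks = q2.blocks := by
        have e1 := List.take_append_drop (m1 + 1) q1.blocks
        have e2 := List.take_append_drop (m2 + 1) q2.blocks
        rw [← e1, ← e2, hteq, hblocks]
      have hqq : q1 = q2 := by ext1; rw [hq]
      subst hqq
      simp [hm]
    · rintro ⟨i, P, c⟩ hmem
      rw [Finset.mem_sigma, Finset.mem_Icc] at hmem
      dsimp only at hmem
      obtain ⟨⟨hi1, hi2⟩, -⟩ := hmem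
      obtain ⟨l, hsort, hl⟩ : ∃ l : List ℕ, l.Pairwise (· ≥ ·) ∧ (↑l : Multiset ℕ) = P.parts :=
        ⟨P.parts.sort (· ≥ ·), Multiset.pairwise_sort _ _, Multiset.sort_eq _ _⟩
      obtain ⟨cb, hcbpos, hcbsum, hcb⟩ : ∃ cb : List ℕ, (∀ x ∈ cb, 0 < x) ∧
          cb.sum = b - i ∧ cb = c.blocks :=
        ⟨c.blocks, fun x hx => c.blocks_pos hx, c.blocks_sum, rfl⟩
      have hlsum : l.sum = i := by
        have := congrArg Multiset.sum hl
        rw [Multiset.sum_coe, P.parts_sum] at this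
        exact this
      have hlpos : ∀ x ∈ l, 0 < x := fun x hx => P.parts_pos (hl ▸ Multiset.mem_coe.2 hx)
      have hlne : l ≠ [] := by
        intro h
        rw [h] at hlsum
        simp at hlsum
        omega
      have hllen : 1 ≤ l.length := List.length_pos_iff.2 hlne
      refine ⟨⟨⟨l ++ cb, ?_, ?_⟩, l.length - 1⟩, ?_, ?_⟩
      · intro x hx
        rcases List.mem_append.1 hx with h | h
        · exact hlpos x h
        · exact hcbpos x h
      · rw [List.sum_append, hlsum, hcbsum]
        omega
      · rw [Finset.mem_sigma, Finset.mem_filter, Finset.mem_range]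
        refine ⟨Finset.mem_univ _, ?_, ?_⟩
        · show l.length - 1 < (l ++ cb).length
          rw [List.length_append]
          omega
        · show ((l ++ cb).take (l.length - 1 + 1)).Pairwise (· ≥ ·)
          have : l.length - 1 + 1 = l.length := by omega
          rw [this, List.take_left]
          exact hsort
      · dsimp only
        have htake : (l ++ cb).take (l.length - 1 + 1) = l := by
          have : l.length - 1 + 1 = l.length := by omega
          rw [this, List.take_left]
        have hdrop : (l ++ cb).drop (l.length - 1 + 1) = cb := by
          have : l.length - 1 + 1 = l.length := by omega
          rw [this, List.drop_left]
        have hsum : ((l ++ cb).take (l.length - 1 + 1)).sum = i := by rw [htake, hlsum]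
        subst hsum
        refine congrArg (Sigma.mk _) ?_
        refine Prod.ext ?_ ?_
        · ext1
          show (↑((l ++ cb).take (l.length - 1 + 1)) : Multiset ℕ) = P.parts
          conv_lhs => rw [htake]
          exact hl
        · ext1
          show (l ++ cb).drop (l.length - 1 + 1) = c.blocks
          conv_lhs => rw [hdrop]
          exact hcb


lemma embCount_diag {b : ℕ} (hb : 1 ≤ b) (q : Composition b) :
    embCount q q = 1 + ((Finset.range q.blocks.length).filter
      (fun m => (q.blocks.take (m + 1)).Pairwise (· ≥ ·))).card := by
  have hne : q.blocks ≠ [] := by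
    intro h
    have hs := q.blocks_sum
    rw [h] at hs
    simp at hs
    omega
  obtain ⟨a, M, hL⟩ := List.exists_cons_of_ne_nil hne
  simp only [embCount, if_pos rfl]
  congr 1
  rw [hL]
  exact card_emb_cons a M

theorem trace_A (b : ℕ) (hb : 1 ≤ b) :
    Matrix.trace (A b) =
      Fintype.card (Nat.Partition b) +
        ∑ i ∈ Finset.range b, 2 ^ (b - i - 1) * Fintype.card (Nat.Partition i) := by
  obtain ⟨n, rfl⟩ : ∃ n, b = n + 1 := ⟨b - 1, by omega⟩
  have htr : Matrix.trace (A (n + 1)) = ∑ q : Composition (n + 1), embCount q q := rfl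
  rw [htr]
  rw [Finset.sum_congr rfl fun q _ => embCount_diag (by omega) q]
  rw [Finset.sum_add_distrib, Finset.sum_const, Finset.card_univ, smul_eq_mul, mul_one]
  rw [composition_card, sum_D]
  -- now: 2^(n+1-1) + ∑ i in Icc 1 (n+1), p i * card (Composition (n+1-i)) = ...
  have hcomp : ∀ i ∈ Finset.Icc 1 (n + 1),
      Fintype.card (Nat.Partition i) * Fintype.card (Composition (n + 1 - i)) =
      Fintype.card (Nat.Partition i) * 2 ^ (n - i) := by
    intro i hi
    rw [composition_card]
    congr 1
    have := (Finset.mem_Icc.1 hi).1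
    congr 1
    omega
  rw [Finset.sum_congr rfl hcomp]
  rw [show Finset.Icc 1 (n + 1) = Finset.Ico 1 (n + 2) by exact (Finset.Ico_add_one_right_eq_Icc 1 (n + 1)).symm]
  rw [Finset.sum_Ico_eq_sum_range (fun i => Fintype.card (Nat.Partition i) * 2 ^ (n - i)) 1 (n + 2)]
  simp only [show n + 2 - 1 = n + 1 from rfl]
  rw [Finset.sum_range_succ (fun i => Fintype.card (Nat.Partition (1 + i)) * 2 ^ (n - (1 + i))) n]
  rw [Finset.sum_range_succ' (fun i => 2 ^ (n + 1 - i - 1) * Fintype.card (Nat.Partition i)) n]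
  have h0 : Fintype.card (Nat.Partition 0) = 1 := Fintype.card_unique
  have hpn : (1 : ℕ) + n = n + 1 := by omega
  rw [hpn]
  have hsum : ∑ i ∈ Finset.range n, Fintype.card (Nat.Partition (1 + i)) * 2 ^ (n - (1 + i)) =
      ∑ i ∈ Finset.range n, 2 ^ (n + 1 - (i + 1) - 1) * Fintype.card (Nat.Partition (i + 1)) := by
    refine Finset.sum_congr rfl fun i hi => ?_
    have : 1 + i = i + 1 := by omega
    rw [this, mul_comm]
    congr 2
    omega
  rw [hsum, h0]
  have : n - (n + 1) = 0 := by omega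
  rw [this]
  simp only [Nat.add_sub_cancel, Nat.sub_zero, pow_zero, mul_one]
  ring
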